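/- In so(𝕆), the commutator of left multiplication by i and right multiplication by j satisfies [L_i, R_j]|_ℍ = 0 and [L_i, R_j]|_{εℍ} = 2 L_k|_{εℍ}, where 𝕆 = ℍ ⊕ εℍ is the Cayley–Dickson decomposition. -/

import Mathlib

open scoped Quaternion

noncomputable section

/-- The octonions, via the Cayley–Dickson construction `𝕆 = ℍ ⊕ ℍ`. -/
abbrev Oct : Type := ℍ[ℝ] × ℍ[ℝ]

/-- Octonion multiplication (Cayley–Dickson). -/
def omul (x y : Oct) : Oct :=
  (x.1 * y.1 - star y.2 * x.2, y.2 * x.1 + x.2 * star y.1)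

/-- Left multiplication `L_q` as a real-linear endomorphism of `𝕆`. -/
def Lo (q : Oct) : Oct →ₗ[ℝ] Oct where
  toFun y := omul q y
  map_add' y z := by
    simp only [omul, Prod.fst_add, Prod.snd_add, star_add, mul_add, add_mul,
      Prod.mk_add_mk, Prod.mk.injEq]
    constructor <;> abel
  map_smul' c y := by
    simp only [omul, Prod.smul_fst, Prod.smul_snd, Quaternion.star_smul,
      mul_smul_comm, smul_mul_assoc, RingHom.id_apply, Prod.smul_mk, smul_sub,
      smul_add, Prod.mk.injEq]

/-- Right multiplication `R_q` as a real-linear endomorphism of `𝕆`. -/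
def Ro (q : Oct) : Oct →ₗ[ℝ] Oct where
  toFun y := omul y q
  map_add' y z := by
    simp only [omul, Prod.fst_add, Prod.snd_add, star_add, mul_add, add_mul,
      Prod.mk_add_mk, Prod.mk.injEq]
    constructor <;> abel
  map_smul' c y := by
    simp only [omul, Prod.smul_fst, Prod.smul_snd, Quaternion.star_smul,
      mul_smul_comm, smul_mul_assoc, RingHom.id_apply, Prod.smul_mk, smul_sub,
      smul_add, Prod.mk.injEq]

/-- The imaginary octonions. -/
def ImO : Set Oct := {x | x.1.re = 0}

/-- A derivation of the octonions (an element of `g₂ ⊂ so(8)`). -/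
def IsOctDer (D : Oct →ₗ[ℝ] Oct) : Prop :=
  ∀ x y : Oct, D (omul x y) = omul (D x) y + omul x (D y)

/-- The standard inner product on `𝕆 = ℍ ⊕ ℍ`. -/
def innO (x y : Oct) : ℝ := inner ℝ x.1 y.1 + inner ℝ x.2 y.2

/-- Membership in `so(8) = so(𝕆)`: skew-symmetry with respect to `innO`. -/
def IsSkewO (A : Oct →ₗ[ℝ] Oct) : Prop :=
  ∀ x y : Oct, innO (A x) y = - innO x (A y)


/-- The quaternion units inside `𝕆 = ℍ ⊕ εℍ`. -/
def oi : Oct := ((⟨0, 1, 0, 0⟩ : ℍ[ℝ]), 0)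
def oj : Oct := ((⟨0, 0, 1, 0⟩ : ℍ[ℝ]), 0)
def ok : Oct := ((⟨0, 0, 0, 1⟩ : ℍ[ℝ]), 0)

theorem oi_fst_re : oi.1.re = 0 := rfl
theorem oi_fst_imI : oi.1.imI = 1 := rfl
theorem oi_fst_imJ : oi.1.imJ = 0 := rfl
theorem oi_fst_imK : oi.1.imK = 0 := rfl
theorem oj_fst_re : oj.1.re = 0 := rfl
theorem oj_fst_imI : oj.1.imI = 0 := rfl
theorem oj_fst_imJ : oj.1.imJ = 1 := rfl
theorem oj_fst_imK : oj.1.imK = 0 := rfl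
theorem ok_fst_re : ok.1.re = 0 := rfl
theorem ok_fst_imI : ok.1.imI = 0 := rfl
theorem ok_fst_imJ : ok.1.imJ = 0 := rfl
theorem ok_fst_imK : ok.1.imK = 1 := rfl
theorem oi_snd : oi.2 = 0 := rfl
theorem oj_snd : oj.2 = 0 := rfl
theorem ok_snd : ok.2 = 0 := rfl

theorem stmt6 :
    (∀ a : ℍ[ℝ], ⁅Lo oi, Ro oj⁆ ((a, 0) : Oct) = 0) ∧
    (∀ a : ℍ[ℝ], ⁅Lo oi, Ro oj⁆ ((0, a) : Oct) = (2 : ℝ) • Lo ok ((0, a) : Oct)) := by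
  constructor <;> intro a <;>
    simp only [Ring.lie_def, LinearMap.sub_apply, Module.End.mul_apply, Lo, Ro,
      LinearMap.coe_mk, AddHom.coe_mk, omul, oi_snd, oj_snd, ok_snd] <;>
    ext <;>
    simp [Quaternion.ext_iff, QuaternionAlgebra.ext_iff, Quaternion.re_mul,
      Quaternion.imI_mul, Quaternion.imJ_mul, Quaternion.imK_mul, oi_fst_re, oi_fst_imI,
      oi_fst_imJ, oi_fst_imK, oj_fst_re, oj_fst_imI, oj_fst_imJ, oj_fst_imK, ok_fst_re,
      ok_fst_imI, ok_fst_imJ, ok_fst_imK] <;> ring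

end
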